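/- (KKL edge-isoperimetric inequality) There exists a constant c > 0 such that for every n and every Boolean function f : {-1,1}^n → {-1,1} with E[f] = 0, max_{k∈[n]} I_k(f) ≥ exp(−c·I(f)). -/

import Mathlib

open Finset

noncomputable def bSgn (b : Bool) : ℝ := if b then 1 else -1

noncomputable def bChi {n : ℕ} (S : Finset (Fin n)) (x : Fin n → Bool) : ℝ :=
  ∏ i ∈ S, bSgn (x i)

noncomputable def bExpect {n : ℕ} (g : (Fin n → Bool) → ℝ) : ℝ :=
  (∑ x : Fin n → Bool, g x) / 2 ^ n

noncomputable def bFourier {n : ℕ} (f : (Fin n → Bool) → ℝ) (S : Finset (Fin n)) : ℝ :=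
  bExpect fun x => f x * bChi S x

def bFlip1 {n : ℕ} (k : Fin n) (x : Fin n → Bool) : Fin n → Bool :=
  Function.update x k (!(x k))

def bFlipS {n : ℕ} (T : Finset (Fin n)) (x : Fin n → Bool) : Fin n → Bool :=
  fun i => if i ∈ T then !(x i) else x i

/-- combinatorial influence of bit `k` -/
noncomputable def inflC {n : ℕ} (f : (Fin n → Bool) → ℝ) (k : Fin n) : ℝ :=
  bExpect fun x => if f x ≠ f (bFlip1 k x) then 1 else 0

/-- spectral influence of bit `k` -/
noncomputable def inflS {n : ℕ} (f : (Fin n → Bool) → ℝ) (k : Fin n) : ℝ :=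
  ∑ S ∈ univ.filter (fun S : Finset (Fin n) => k ∈ S), bFourier f S ^ 2

/-- total influence (spectral form) -/
noncomputable def totInfl {n : ℕ} (f : (Fin n → Bool) → ℝ) : ℝ :=
  ∑ S : Finset (Fin n), (S.card : ℝ) * bFourier f S ^ 2

/-- spectrum entropy, base 2; terms with zero coefficient contribute 0 -/
noncomputable def specEnt {n : ℕ} (f : (Fin n → Bool) → ℝ) : ℝ :=
  ∑ S : Finset (Fin n), bFourier f S ^ 2 * Real.logb 2 (1 / bFourier f S ^ 2)

/-- `f` is Boolean (±1)-valued -/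
def IsBooleanFn {n : ℕ} (f : (Fin n → Bool) → ℝ) : Prop :=
  ∀ x, f x = 1 ∨ f x = -1

open Finset

section Basics
variable {n : ℕ}

lemma bSgn_sq (b : Bool) : bSgn b ^ 2 = 1 := by cases b <;> simp [bSgn]

lemma bSgn_not (b : Bool) : bSgn (!b) = - bSgn b := by cases b <;> simp [bSgn]

lemma sum_bSgn : ∑ b : Bool, bSgn b = 0 := by simp [bSgn]

lemma bChi_empty (x : Fin n → Bool) : bChi (∅ : Finset (Fin n)) x = 1 := by simp [bChi]

lemma bFlip1_invol (k : Fin n) (x : Fin n → Bool) : bFlip1 k (bFlip1 k x) = x := by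
  funext i
  by_cases h : i = k
  · subst h; simp [bFlip1]
  · simp [bFlip1, Function.update_of_ne h]

lemma sum_flip (k : Fin n) (u : (Fin n → Bool) → ℝ) :
    ∑ x : Fin n → Bool, u (bFlip1 k x) = ∑ x : Fin n → Bool, u x := by
  apply Fintype.sum_bijective (bFlip1 k) (Function.Involutive.bijective (bFlip1_invol k))
  intro x; rfl

lemma bChi_flip (S : Finset (Fin n)) (k : Fin n) (x : Fin n → Bool) :
    bChi S (bFlip1 k x) = (if k ∈ S then -1 else 1) * bChi S x := by
  by_cases hk : k ∈ S
  · rw [if_pos hk, bChi, bChi, ← Finset.mul_prod_erase _ _ hk, ← Finset.mul_prod_erase _ _ hk]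
    have h1 : (bFlip1 k x) k = !(x k) := by simp [bFlip1]
    have h2 : ∀ i ∈ S.erase k, bSgn ((bFlip1 k x) i) = bSgn (x i) := by
      intro i hi
      have : i ≠ k := Finset.ne_of_mem_erase hi
      simp [bFlip1, Function.update_of_ne this]
    rw [Finset.prod_congr rfl h2, h1, bSgn_not]; ring
  · rw [if_neg hk, one_mul, bChi, bChi]
    apply Finset.prod_congr rfl
    intro i hi
    have : i ≠ k := fun h => hk (h ▸ hi)
    simp [bFlip1, Function.update_of_ne this]

lemma sum_sgn_mul_eq_zero (k : Fin n) (u : (Fin n → Bool) → ℝ)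
    (hu : ∀ x, u (bFlip1 k x) = u x) :
    ∑ x : Fin n → Bool, bSgn (x k) * u x = 0 := by
  have h := sum_flip k (fun x => bSgn (x k) * u x)
  have h2 : ∀ x : Fin n → Bool, bSgn ((bFlip1 k x) k) * u (bFlip1 k x)
      = - (bSgn (x k) * u x) := by
    intro x
    have : (bFlip1 k x) k = !(x k) := by simp [bFlip1]
    rw [this, bSgn_not, hu]; ring
  rw [Finset.sum_congr rfl (fun x _ => h2 x), Finset.sum_neg_distrib] at h
  linarith

end Basics
section Orth
variable {n : ℕ}

lemma bChi_as_univ (S : Finset (Fin n)) (x : Fin n → Bool) :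
    bChi S x = ∏ i : Fin n, (if i ∈ S then bSgn (x i) else 1) := by
  rw [bChi, ← Finset.prod_filter]
  congr 1
  simp [Finset.filter_mem_eq_inter]

lemma sum_bChi (S : Finset (Fin n)) :
    ∑ x : Fin n → Bool, bChi S x = if S = ∅ then (2 : ℝ) ^ n else 0 := by
  have h : ∀ x : Fin n → Bool, bChi S x = ∏ i : Fin n, (if i ∈ S then bSgn (x i) else 1) :=
    bChi_as_univ S
  rw [Finset.sum_congr rfl (fun x _ => h x)]
  rw [← Fintype.piFinset_univ, ← Finset.prod_univ_sum (fun _ : Fin n => (univ : Finset Bool)) (fun i b => if i ∈ S then bSgn b else 1)]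
  have : ∀ i : Fin n, (∑ b : Bool, if i ∈ S then bSgn b else 1) =
      if i ∈ S then 0 else 2 := by
    intro i; by_cases hi : i ∈ S <;> simp [hi, bSgn]
  rw [Finset.prod_congr rfl (fun i _ => this i)]
  by_cases hS : S = ∅
  · simp [hS]
  · rw [if_neg hS]
    obtain ⟨i, hi⟩ := Finset.nonempty_iff_ne_empty.2 hS
    exact Finset.prod_eq_zero (Finset.mem_univ i) (by simp [hi])

lemma sum_chi_mul_chi (x y : Fin n → Bool) :
    ∑ S : Finset (Fin n), bChi S x * bChi S y = if x = y then (2:ℝ)^n else 0 := by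
  have key : ∀ S : Finset (Fin n), bChi S x * bChi S y = ∏ i ∈ S, (bSgn (x i) * bSgn (y i)) := by
    intro S; rw [bChi, bChi, Finset.prod_mul_distrib]
  rw [Finset.sum_congr rfl (fun S _ => key S)]
  have expand : ∑ S : Finset (Fin n), ∏ i ∈ S, (bSgn (x i) * bSgn (y i))
      = ∏ i : Fin n, (bSgn (x i) * bSgn (y i) + 1) := by
    rw [Finset.prod_add]
    rw [Finset.powerset_univ]
    apply Finset.sum_congr rfl
    intro S _
    simp
  rw [expand]
  have factor : ∀ i : Fin n, bSgn (x i) * bSgn (y i) + 1 = if x i = y i then 2 else 0 := by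
    intro i; cases hx : x i <;> cases hy : y i <;> simp [bSgn] <;> norm_num
  rw [Finset.prod_congr rfl (fun i _ => factor i)]
  by_cases hxy : x = y
  · subst hxy; simp
  · rw [if_neg hxy]
    obtain ⟨i, hi⟩ : ∃ i, x i ≠ y i := Function.ne_iff.1 hxy
    exact Finset.prod_eq_zero (Finset.mem_univ i) (by simp [hi])

lemma parseval (f g : (Fin n → Bool) → ℝ) :
    bExpect (fun x => f x * g x) = ∑ S : Finset (Fin n), bFourier f S * bFourier g S := by
  have h2n : ((2:ℝ)^n) ≠ 0 := by positivity
  have : ∀ S : Finset (Fin n), bFourier f S * bFourier g S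
      = (∑ x : Fin n → Bool, ∑ y : Fin n → Bool,
          f x * g y * (bChi S x * bChi S y)) / ((2:ℝ)^n * (2:ℝ)^n) := by
    intro S
    rw [bFourier, bFourier, bExpect, bExpect, div_mul_div_comm, Finset.sum_mul_sum]
    congr 1
    apply Finset.sum_congr rfl; intro x _
    apply Finset.sum_congr rfl; intro y _
    ring
  rw [Finset.sum_congr rfl (fun S _ => this S), ← Finset.sum_div]
  rw [Finset.sum_comm]
  have swap2 : ∀ x : Fin n → Bool,
      ∑ S : Finset (Fin n), ∑ y : Fin n → Bool, f x * g y * (bChi S x * bChi S y)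
      = ∑ y : Fin n → Bool, f x * g y * (if x = y then (2:ℝ)^n else 0) := by
    intro x
    rw [Finset.sum_comm]
    apply Finset.sum_congr rfl; intro y _
    rw [← Finset.mul_sum, sum_chi_mul_chi]
  rw [Finset.sum_congr rfl (fun x _ => swap2 x)]
  have diag : ∀ x : Fin n → Bool,
      ∑ y : Fin n → Bool, f x * g y * (if x = y then (2:ℝ)^n else 0) = f x * g x * (2:ℝ)^n := by
    intro x
    rw [Finset.sum_eq_single x]
    · simp
    · intro y _ hy; simp [fun h : x = y => hy h.symm]
      intro h; exact absurd h.symm hy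
    · intro h; exact absurd (Finset.mem_univ x) h
  rw [Finset.sum_congr rfl (fun x _ => diag x), bExpect]
  rw [← Finset.sum_mul]
  field_simp

end Orth
noncomputable def bDeriv {n : ℕ} (f : (Fin n → Bool) → ℝ) (k : Fin n) (x : Fin n → Bool) : ℝ :=
  (f x - f (bFlip1 k x)) / 2

section Deriv
variable {n : ℕ}

lemma bFourier_bDeriv (f : (Fin n → Bool) → ℝ) (k : Fin n) (S : Finset (Fin n)) :
    bFourier (bDeriv f k) S = if k ∈ S then bFourier f S else 0 := by
  have hflip : ∑ x : Fin n → Bool, f (bFlip1 k x) * bChi S x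
      = (if k ∈ S then -1 else 1) * ∑ x : Fin n → Bool, f x * bChi S x := by
    have := sum_flip k (fun x => f x * ((if k ∈ S then -1 else 1) * bChi S x))
    calc ∑ x : Fin n → Bool, f (bFlip1 k x) * bChi S x
        = ∑ x : Fin n → Bool, f (bFlip1 k x) *
            ((if k ∈ S then -1 else 1) * bChi S (bFlip1 k x)) := by
          apply Finset.sum_congr rfl; intro x _
          rw [bChi_flip]
          by_cases h : k ∈ S <;> simp [h] <;> ring
      _ = ∑ x : Fin n → Bool, f x * ((if k ∈ S then -1 else 1) * bChi S x) :=
          sum_flip k (fun x => f x * ((if k ∈ S then -1 else 1) * bChi S x))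
      _ = (if k ∈ S then -1 else 1) * ∑ x : Fin n → Bool, f x * bChi S x := by
          rw [Finset.mul_sum]; apply Finset.sum_congr rfl; intro x _; ring
  have hsum : ∑ x : Fin n → Bool, bDeriv f k x * bChi S x
      = ((∑ x : Fin n → Bool, f x * bChi S x)
        - ∑ x : Fin n → Bool, f (bFlip1 k x) * bChi S x) / 2 := by
    rw [← Finset.sum_sub_distrib, Finset.sum_div]
    apply Finset.sum_congr rfl; intro x _; rw [bDeriv]; ring
  rw [bFourier, bExpect, hsum, hflip]
  by_cases h : k ∈ S <;> simp [h, bFourier, bExpect] <;> ring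

lemma bDeriv_vals (f : (Fin n → Bool) → ℝ) (hf : IsBooleanFn f) (k : Fin n) (x : Fin n → Bool) :
    bDeriv f k x = 0 ∨ bDeriv f k x = 1 ∨ bDeriv f k x = -1 := by
  rcases hf x with h1 | h1 <;> rcases hf (bFlip1 k x) with h2 | h2 <;>
    simp [bDeriv, h1, h2] <;> norm_num

lemma bDeriv_sq_eq_abs (f : (Fin n → Bool) → ℝ) (hf : IsBooleanFn f) (k : Fin n)
    (x : Fin n → Bool) : (bDeriv f k x) ^ 2 = |bDeriv f k x| := by
  rcases bDeriv_vals f hf k x with h | h | h <;> rw [h] <;> norm_num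

lemma bDeriv_pow4 (f : (Fin n → Bool) → ℝ) (hf : IsBooleanFn f) (k : Fin n)
    (x : Fin n → Bool) : (bDeriv f k x) ^ 4 = (bDeriv f k x) ^ 2 := by
  rcases bDeriv_vals f hf k x with h | h | h <;> rw [h] <;> norm_num

lemma inflS_eq_expect_sq (f : (Fin n → Bool) → ℝ) (k : Fin n) :
    inflS f k = bExpect (fun x => (bDeriv f k x) ^ 2) := by
  have : bExpect (fun x => bDeriv f k x * bDeriv f k x)
      = ∑ S : Finset (Fin n), bFourier (bDeriv f k) S * bFourier (bDeriv f k) S :=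
    parseval _ _
  simp only [← sq] at this
  rw [this, inflS]
  rw [Finset.sum_filter]
  apply Finset.sum_congr rfl
  intro S _
  rw [bFourier_bDeriv]
  by_cases h : k ∈ S <;> simp [h]

end Deriv
section Bonami
variable {n : ℕ}

lemma bExpect_const (c : ℝ) : bExpect (fun _ : Fin n → Bool => c) = c := by
  rw [bExpect, Finset.sum_const, Finset.card_univ]
  have : (Fintype.card (Fin n → Bool) : ℝ) = 2 ^ n := by
    rw [Fintype.card_fun]; simp
  rw [nsmul_eq_mul, this]
  field_simp

lemma bExpect_nonneg {g : (Fin n → Bool) → ℝ} (hg : ∀ x, 0 ≤ g x) : 0 ≤ bExpect g := by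
  rw [bExpect]
  apply div_nonneg (Finset.sum_nonneg fun x _ => hg x) (by positivity)

lemma bExpect_mono {g h : (Fin n → Bool) → ℝ} (hgh : ∀ x, g x ≤ h x) :
    bExpect g ≤ bExpect h := by
  rw [bExpect, bExpect]
  have : (∑ x : Fin n → Bool, g x) ≤ ∑ x : Fin n → Bool, h x :=
    Finset.sum_le_sum fun x _ => hgh x
  have h2 : (0:ℝ) < 2 ^ n := by positivity
  exact div_le_div_of_nonneg_right this h2.le

lemma bExpect_add (g h : (Fin n → Bool) → ℝ) :
    bExpect (fun x => g x + h x) = bExpect g + bExpect h := by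
  rw [bExpect, bExpect, bExpect, ← add_div, Finset.sum_add_distrib]

lemma bExpect_smul (c : ℝ) (g : (Fin n → Bool) → ℝ) :
    bExpect (fun x => c * g x) = c * bExpect g := by
  rw [bExpect, bExpect, ← Finset.mul_sum, mul_div_assoc]

/-- Cauchy-Schwarz for bExpect -/
lemma bExpect_cauchy (g h : (Fin n → Bool) → ℝ) :
    bExpect (fun x => g x * h x)
      ≤ Real.sqrt (bExpect fun x => g x ^ 2) * Real.sqrt (bExpect fun x => h x ^ 2) := by
  have key := Real.sum_mul_le_sqrt_mul_sqrt Finset.univ g h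
  have h2n : (0:ℝ) < 2 ^ n := by positivity
  rw [bExpect, bExpect, bExpect]
  rw [div_le_iff₀ h2n]
  have hP : Real.sqrt ((2:ℝ)^n) * Real.sqrt ((2:ℝ)^n) = 2 ^ n :=
    Real.mul_self_sqrt (le_of_lt h2n)
  have hPne : Real.sqrt ((2:ℝ)^n) ≠ 0 := by positivity
  calc (∑ x : Fin n → Bool, g x * h x)
      ≤ Real.sqrt (∑ x : Fin n → Bool, g x ^ 2) * Real.sqrt (∑ x : Fin n → Bool, h x ^ 2) := key
    _ = Real.sqrt ((∑ x : Fin n → Bool, g x ^ 2) / 2 ^ n) *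
        Real.sqrt ((∑ x : Fin n → Bool, h x ^ 2) / 2 ^ n) * 2 ^ n := by
        rw [Real.sqrt_div (by positivity), Real.sqrt_div (by positivity)]
        field_simp
        rw [Real.sq_sqrt h2n.le]

lemma quartic_key (e g h : ℝ) (he : e ^ 2 = 1) :
    (g + e * h) ^ 4 = g ^ 4 + 6 * (g ^ 2 * h ^ 2) + h ^ 4
      + e * (4 * g ^ 3 * h + 4 * g * h ^ 3) := by
  linear_combination (6 * g ^ 2 * h ^ 2 + (e ^ 2 + 1) * h ^ 4 + 4 * e * g * h ^ 3) * he

theorem bonami (J : Finset (Fin n)) (a : Finset (Fin n) → ℝ) :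
    bExpect (fun x => (∑ S ∈ J.powerset, a S * bChi S x) ^ 4)
      ≤ (∑ S ∈ J.powerset, (3:ℝ) ^ S.card * a S ^ 2) ^ 2 := by
  induction J using Finset.induction_on generalizing a with
  | empty =>
      have h1 : ∀ x : Fin n → Bool, (∑ S ∈ (∅ : Finset (Fin n)).powerset, a S * bChi S x)
          = a ∅ := by
        intro x; rw [Finset.powerset_empty, Finset.sum_singleton, bChi_empty, mul_one]
      calc bExpect (fun x => (∑ S ∈ (∅ : Finset (Fin n)).powerset, a S * bChi S x) ^ 4)
          = bExpect (fun _ : Fin n → Bool => a ∅ ^ 4) := by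
            congr 1; funext x; rw [h1]
        _ = a ∅ ^ 4 := bExpect_const _
        _ ≤ (∑ S ∈ (∅ : Finset (Fin n)).powerset, (3:ℝ) ^ S.card * a S ^ 2) ^ 2 := by
            rw [Finset.powerset_empty, Finset.sum_singleton]
            apply le_of_eq
            simp
            ring
  | @insert j J hj ih =>
      set G : (Fin n → Bool) → ℝ := fun x => ∑ T ∈ J.powerset, a T * bChi T x with hGdef
      set H : (Fin n → Bool) → ℝ := fun x => ∑ T ∈ J.powerset, a (insert j T) * bChi T x
        with hHdef
      have hjT : ∀ T ∈ J.powerset, j ∉ T := fun T hT hjT => hj (Finset.mem_powerset.1 hT hjT)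
      have hF : ∀ x, (∑ S ∈ (insert j J).powerset, a S * bChi S x)
          = G x + bSgn (x j) * H x := by
        intro x
        rw [Finset.sum_powerset_insert hj]
        congr 1
        rw [Finset.mul_sum]
        apply Finset.sum_congr rfl
        intro T hT
        have hc : bChi (insert j T) x = bSgn (x j) * bChi T x := by
          rw [bChi, Finset.prod_insert (hjT T hT), bChi]
        rw [hc]; ring
      have hGflip : ∀ x, G (bFlip1 j x) = G x := by
        intro x
        apply Finset.sum_congr rfl
        intro T hT
        rw [bChi_flip, if_neg (hjT T hT), one_mul]
      have hHflip : ∀ x, H (bFlip1 j x) = H x := by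
        intro x
        apply Finset.sum_congr rfl
        intro T hT
        rw [bChi_flip, if_neg (hjT T hT), one_mul]
      have hExp : bExpect (fun x => (G x + bSgn (x j) * H x) ^ 4)
          = bExpect (fun x => G x ^ 4) + 6 * bExpect (fun x => G x ^ 2 * H x ^ 2)
            + bExpect (fun x => H x ^ 4) := by
        have hzero : ∑ x : Fin n → Bool,
            bSgn (x j) * (4 * G x ^ 3 * H x + 4 * G x * H x ^ 3) = 0 :=
          sum_sgn_mul_eq_zero j _ (fun x => by rw [hGflip, hHflip])
        have hpt : ∀ x : Fin n → Bool, (G x + bSgn (x j) * H x) ^ 4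
            = (G x ^ 4 + 6 * (G x ^ 2 * H x ^ 2) + H x ^ 4)
              + bSgn (x j) * (4 * G x ^ 3 * H x + 4 * G x * H x ^ 3) :=
          fun x => quartic_key _ _ _ (bSgn_sq _)
        rw [bExpect, bExpect, bExpect, bExpect]
        rw [Finset.sum_congr rfl (fun x _ => hpt x), Finset.sum_add_distrib, hzero, add_zero,
          Finset.sum_add_distrib, Finset.sum_add_distrib, ← Finset.mul_sum]
        field_simp
      set A : ℝ := ∑ T ∈ J.powerset, (3:ℝ) ^ T.card * a T ^ 2 with hAdef
      set B : ℝ := ∑ T ∈ J.powerset, (3:ℝ) ^ T.card * a (insert j T) ^ 2 with hBdef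
      have hA0 : 0 ≤ A := Finset.sum_nonneg fun T _ => by positivity
      have hB0 : 0 ≤ B := Finset.sum_nonneg fun T _ => by positivity
      have hG4 : bExpect (fun x => G x ^ 4) ≤ A ^ 2 := ih a
      have hH4 : bExpect (fun x => H x ^ 4) ≤ B ^ 2 := ih (fun T => a (insert j T))
      have hG4nn : 0 ≤ bExpect (fun x => G x ^ 4) := bExpect_nonneg fun x => by positivity
      have hH4nn : 0 ≤ bExpect (fun x => H x ^ 4) := bExpect_nonneg fun x => by positivity
      have hGH : bExpect (fun x => G x ^ 2 * H x ^ 2) ≤ A * B := by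
        have hcs := bExpect_cauchy (fun x => G x ^ 2) (fun x => H x ^ 2)
        have e1 : bExpect (fun x => (G x ^ 2) ^ 2) = bExpect (fun x => G x ^ 4) := by
          congr 1; funext x; ring
        have e2 : bExpect (fun x => (H x ^ 2) ^ 2) = bExpect (fun x => H x ^ 4) := by
          congr 1; funext x; ring
        rw [e1, e2] at hcs
        have hsg : Real.sqrt (bExpect fun x => G x ^ 4) ≤ A := by
          calc Real.sqrt (bExpect fun x => G x ^ 4) ≤ Real.sqrt (A ^ 2) :=
                Real.sqrt_le_sqrt hG4
            _ = A := Real.sqrt_sq hA0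
        have hsh : Real.sqrt (bExpect fun x => H x ^ 4) ≤ B := by
          calc Real.sqrt (bExpect fun x => H x ^ 4) ≤ Real.sqrt (B ^ 2) :=
                Real.sqrt_le_sqrt hH4
            _ = B := Real.sqrt_sq hB0
        calc bExpect (fun x => G x ^ 2 * H x ^ 2)
            ≤ Real.sqrt (bExpect fun x => G x ^ 4) * Real.sqrt (bExpect fun x => H x ^ 4) := hcs
          _ ≤ A * B := mul_le_mul hsg hsh (Real.sqrt_nonneg _) hA0
      have hRHS : ∑ S ∈ (insert j J).powerset, (3:ℝ) ^ S.card * a S ^ 2 = A + 3 * B := by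
        rw [Finset.sum_powerset_insert hj]
        congr 1
        rw [hBdef, Finset.mul_sum]
        apply Finset.sum_congr rfl
        intro T hT
        rw [Finset.card_insert_of_notMem (hjT T hT), pow_succ]
        ring
      calc bExpect (fun x => (∑ S ∈ (insert j J).powerset, a S * bChi S x) ^ 4)
          = bExpect (fun x => (G x + bSgn (x j) * H x) ^ 4) := by
            congr 1; funext x; rw [hF]
        _ = bExpect (fun x => G x ^ 4) + 6 * bExpect (fun x => G x ^ 2 * H x ^ 2)
            + bExpect (fun x => H x ^ 4) := hExp
        _ ≤ A ^ 2 + 6 * (A * B) + B ^ 2 := by linarith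
        _ ≤ (A + 3 * B) ^ 2 := by nlinarith [sq_nonneg B]
        _ = (∑ S ∈ (insert j J).powerset, (3:ℝ) ^ S.card * a S ^ 2) ^ 2 := by rw [hRHS]

end Bonami
section Hyper
variable {n : ℕ}

lemma expect_mul_sum_chi (g : (Fin n → Bool) → ℝ) (c : Finset (Fin n) → ℝ) :
    bExpect (fun x => g x * ∑ S : Finset (Fin n), c S * bChi S x)
      = ∑ S : Finset (Fin n), c S * bFourier g S := by
  have : ∀ S : Finset (Fin n), c S * bFourier g S
      = (∑ x : Fin n → Bool, c S * (g x * bChi S x)) / 2 ^ n := by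
    intro S
    rw [bFourier, bExpect, ← mul_div_assoc, Finset.mul_sum]
  rw [Finset.sum_congr rfl (fun S _ => this S), ← Finset.sum_div, bExpect]
  congr 1
  rw [Finset.sum_comm]
  apply Finset.sum_congr rfl
  intro x _
  rw [Finset.mul_sum]
  apply Finset.sum_congr rfl
  intro S _
  ring

lemma bonami_univ (b : Finset (Fin n) → ℝ) :
    bExpect (fun x => (∑ S : Finset (Fin n), ((3:ℝ)⁻¹ ^ S.card * b S) * bChi S x) ^ 4)
      ≤ (∑ S : Finset (Fin n), (3:ℝ)⁻¹ ^ S.card * b S ^ 2) ^ 2 := by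
  have h := bonami Finset.univ (fun S => (3:ℝ)⁻¹ ^ S.card * b S)
  rw [Finset.powerset_univ] at h
  calc bExpect (fun x => (∑ S : Finset (Fin n), ((3:ℝ)⁻¹ ^ S.card * b S) * bChi S x) ^ 4)
      ≤ (∑ S : Finset (Fin n), (3:ℝ) ^ S.card * ((3:ℝ)⁻¹ ^ S.card * b S) ^ 2) ^ 2 := h
    _ = (∑ S : Finset (Fin n), (3:ℝ)⁻¹ ^ S.card * b S ^ 2) ^ 2 := by
        congr 1
        apply Finset.sum_congr rfl
        intro S _
        have h3 : ((3:ℝ) ^ S.card) ≠ 0 := by positivity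
        rw [inv_pow]
        field_simp

lemma Q_le_infl_pow (f : (Fin n → Bool) → ℝ) (hf : IsBooleanFn f) (k : Fin n) :
    ∑ S ∈ univ.filter (fun S : Finset (Fin n) => k ∈ S), (3:ℝ)⁻¹ ^ S.card * bFourier f S ^ 2
      ≤ inflS f k * Real.sqrt (inflS f k) := by
  set g : (Fin n → Bool) → ℝ := bDeriv f k with hg
  set I : ℝ := inflS f k with hIdef
  set Q : ℝ := ∑ S : Finset (Fin n), (3:ℝ)⁻¹ ^ S.card * bFourier g S ^ 2 with hQdef
  have hQeq : ∑ S ∈ univ.filter (fun S : Finset (Fin n) => k ∈ S),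
      (3:ℝ)⁻¹ ^ S.card * bFourier f S ^ 2 = Q := by
    rw [hQdef, Finset.sum_filter]
    apply Finset.sum_congr rfl
    intro S _
    rw [hg, bFourier_bDeriv]
    by_cases h : k ∈ S <;> simp [h]
  rw [hQeq]
  have hI2 : bExpect (fun x => g x ^ 2) = I := (inflS_eq_expect_sq f k).symm
  have hI0 : 0 ≤ I := by
    rw [← hI2]; exact bExpect_nonneg fun x => sq_nonneg _
  have hQ0 : 0 ≤ Q := Finset.sum_nonneg fun S _ => by positivity
  set T : (Fin n → Bool) → ℝ :=
    fun x => ∑ S : Finset (Fin n), ((3:ℝ)⁻¹ ^ S.card * bFourier g S) * bChi S x with hT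
  have hQT : bExpect (fun x => g x * T x) = Q := by
    rw [hT, expect_mul_sum_chi g (fun S => (3:ℝ)⁻¹ ^ S.card * bFourier g S), hQdef]
    apply Finset.sum_congr rfl
    intro S _
    ring
  have hT4 : bExpect (fun x => T x ^ 4) ≤ Q ^ 2 := bonami_univ (fun S => bFourier g S)
  have hg4 : bExpect (fun x => g x ^ 4) = I := by
    rw [← hI2]; congr 1; funext x; exact bDeriv_pow4 f hf k x
  -- step 1
  have step1 : bExpect (fun x => g x * T x) ≤ bExpect (fun x => g x ^ 2 * |T x|) := by
    apply bExpect_mono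
    intro x
    calc g x * T x ≤ |g x * T x| := le_abs_self _
      _ = |g x| * |T x| := abs_mul _ _
      _ = g x ^ 2 * |T x| := by rw [← bDeriv_sq_eq_abs f hf k x, hg]
  -- step 2 (Cauchy-Schwarz)
  have step2 : bExpect (fun x => g x ^ 2 * |T x|)
      ≤ Real.sqrt I * Real.sqrt (bExpect fun x => g x ^ 2 * T x ^ 2) := by
    have hcs := bExpect_cauchy (fun x => |g x|) (fun x => |g x| * |T x|)
    have e1 : bExpect (fun x => |g x| * (|g x| * |T x|))
        = bExpect (fun x => g x ^ 2 * |T x|) := by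
      congr 1; funext x
      rw [← mul_assoc, abs_mul_abs_self]; ring_nf
    have e2 : bExpect (fun x => |g x| ^ 2) = I := by
      rw [← hI2]; congr 1; funext x; rw [sq_abs]
    have e3 : bExpect (fun x => (|g x| * |T x|) ^ 2)
        = bExpect (fun x => g x ^ 2 * T x ^ 2) := by
      congr 1; funext x; rw [mul_pow, sq_abs, sq_abs]
    rw [e1, e2, e3] at hcs
    exact hcs
  -- step 3 (Cauchy-Schwarz again)
  have step3 : bExpect (fun x => g x ^ 2 * T x ^ 2)
      ≤ Real.sqrt I * Q := by
    have hcs := bExpect_cauchy (fun x => g x ^ 2) (fun x => T x ^ 2)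
    have e1 : bExpect (fun x => (g x ^ 2) ^ 2) = I := by
      rw [← hg4]; congr 1; funext x; ring
    have e2 : bExpect (fun x => (T x ^ 2) ^ 2) = bExpect (fun x => T x ^ 4) := by
      congr 1; funext x; ring
    rw [e1, e2] at hcs
    have hsT : Real.sqrt (bExpect fun x => T x ^ 4) ≤ Q := by
      calc Real.sqrt (bExpect fun x => T x ^ 4) ≤ Real.sqrt (Q ^ 2) := Real.sqrt_le_sqrt hT4
        _ = Q := Real.sqrt_sq hQ0
    calc bExpect (fun x => g x ^ 2 * T x ^ 2)
        ≤ Real.sqrt I * Real.sqrt (bExpect fun x => T x ^ 4) := hcs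
      _ ≤ Real.sqrt I * Q := by
          apply mul_le_mul_of_nonneg_left hsT (Real.sqrt_nonneg _)
  -- combine
  have hmain : Q ≤ Real.sqrt I * Real.sqrt (Real.sqrt I * Q) := by
    calc Q = bExpect (fun x => g x * T x) := hQT.symm
      _ ≤ bExpect (fun x => g x ^ 2 * |T x|) := step1
      _ ≤ Real.sqrt I * Real.sqrt (bExpect fun x => g x ^ 2 * T x ^ 2) := step2
      _ ≤ Real.sqrt I * Real.sqrt (Real.sqrt I * Q) := by
          apply mul_le_mul_of_nonneg_left (Real.sqrt_le_sqrt step3) (Real.sqrt_nonneg _)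
  rcases le_or_gt Q 0 with hQ | hQ
  · calc Q ≤ 0 := hQ
      _ ≤ I * Real.sqrt I := mul_nonneg hI0 (Real.sqrt_nonneg _)
  · have hsq : Q * Q ≤ (Real.sqrt I * Real.sqrt (Real.sqrt I * Q))
        * (Real.sqrt I * Real.sqrt (Real.sqrt I * Q)) :=
      mul_le_mul hmain hmain hQ.le (mul_nonneg (Real.sqrt_nonneg _) (Real.sqrt_nonneg _))
    have hrhs : (Real.sqrt I * Real.sqrt (Real.sqrt I * Q))
        * (Real.sqrt I * Real.sqrt (Real.sqrt I * Q)) = I * (Real.sqrt I * Q) := by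
      have h1 : Real.sqrt I * Real.sqrt I = I := Real.mul_self_sqrt hI0
      have h2 : Real.sqrt (Real.sqrt I * Q) * Real.sqrt (Real.sqrt I * Q)
          = Real.sqrt I * Q := Real.mul_self_sqrt (mul_nonneg (Real.sqrt_nonneg _) hQ.le)
      calc _ = (Real.sqrt I * Real.sqrt I)
          * (Real.sqrt (Real.sqrt I * Q) * Real.sqrt (Real.sqrt I * Q)) := by ring
        _ = I * (Real.sqrt I * Q) := by rw [h1, h2]
    rw [hrhs] at hsq
    have : Q * Q ≤ (I * Real.sqrt I) * Q := by linarith [hsq]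
    exact le_of_mul_le_mul_right (by linarith) hQ

end Hyper
section Final
variable {n : ℕ}

lemma inflS_nonneg (f : (Fin n → Bool) → ℝ) (k : Fin n) : 0 ≤ inflS f k :=
  Finset.sum_nonneg fun S _ => sq_nonneg _

lemma inv3_pow_exp (c : ℕ) : (3:ℝ)⁻¹ ^ c = Real.exp (-((c:ℝ) * Real.log 3)) := by
  have h3 : (3:ℝ) = Real.exp (Real.log 3) := (Real.exp_log (by norm_num)).symm
  rw [Real.exp_neg, Real.exp_nat_mul, ← h3, inv_pow]

lemma parseval_self (f : (Fin n → Bool) → ℝ) (hf : IsBooleanFn f) :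
    ∑ S : Finset (Fin n), bFourier f S ^ 2 = 1 := by
  have h := parseval f f
  have h1 : bExpect (fun x => f x * f x) = 1 := by
    have : (fun x : Fin n → Bool => f x * f x) = fun _ => (1:ℝ) := by
      funext x; rcases hf x with h | h <;> rw [h] <;> norm_num
    rw [this, bExpect_const]
  calc ∑ S : Finset (Fin n), bFourier f S ^ 2
      = ∑ S : Finset (Fin n), bFourier f S * bFourier f S := by
        apply Finset.sum_congr rfl; intro S _; ring
    _ = bExpect (fun x => f x * f x) := h.symm
    _ = 1 := h1

lemma bFourier_empty (f : (Fin n → Bool) → ℝ) : bFourier f ∅ = bExpect f := by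
  rw [bFourier]
  congr 1
  funext x
  rw [bChi_empty, mul_one]

/-- double counting: `∑ k, ∑ S ∋ k, t S = ∑ S, card S * t S` -/
lemma sum_sum_mem (t : Finset (Fin n) → ℝ) :
    ∑ k : Fin n, ∑ S ∈ univ.filter (fun S : Finset (Fin n) => k ∈ S), t S
      = ∑ S : Finset (Fin n), (S.card : ℝ) * t S := by
  have h1 : ∀ k : Fin n, ∑ S ∈ univ.filter (fun S : Finset (Fin n) => k ∈ S), t S
      = ∑ S : Finset (Fin n), if k ∈ S then t S else 0 := by
    intro k; rw [Finset.sum_filter]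
  rw [Finset.sum_congr rfl (fun k _ => h1 k), Finset.sum_comm]
  apply Finset.sum_congr rfl
  intro S _
  rw [Finset.sum_ite_mem, Finset.univ_inter, Finset.sum_const, nsmul_eq_mul]

set_option maxHeartbeats 2000000 in
theorem kkl_main : ∀ (n : ℕ) (f : (Fin n → Bool) → ℝ), IsBooleanFn f →
    bExpect f = 0 → ∃ k : Fin n, Real.exp (-13 * totInfl f) ≤ inflS f k := by
  intro n f hf hE
  -- n must be positive
  rcases Nat.eq_zero_or_pos n with h0 | hn
  · exfalso
    subst h0
    set x0 : Fin 0 → Bool := fun i => i.elim0 with hx0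
    have hx : (∑ x : Fin 0 → Bool, f x) = f x0 := by
      apply Finset.sum_eq_single x0
      · intro y _ hy; exact absurd (funext fun i => i.elim0) hy
      · intro hmem; exact absurd (Finset.mem_univ _) hmem
    have hE' : (∑ x : Fin 0 → Bool, f x) / 2 ^ (0:ℕ) = 0 := hE
    rw [hx] at hE'
    simp at hE'
    rcases hf x0 with h | h <;> rw [h] at hE' <;> norm_num at hE'
  have hne : (Finset.univ : Finset (Fin n)).Nonempty := by
    rw [Finset.univ_nonempty_iff]
    exact Fin.pos_iff_nonempty.1 hn
  obtain ⟨k, -, hk⟩ := Finset.exists_max_image Finset.univ (fun k => inflS f k) hne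
  refine ⟨k, ?_⟩
  set m : ℝ := inflS f k with hm
  set I : ℝ := totInfl f with hI
  have hm0 : 0 ≤ m := inflS_nonneg f k
  -- Parseval facts
  have hPar : ∑ S : Finset (Fin n), bFourier f S ^ 2 = 1 := parseval_self f hf
  have hemp : bFourier f ∅ = 0 := by rw [bFourier_empty, hE]
  have hsum_ne : ∑ S ∈ Finset.univ.erase (∅ : Finset (Fin n)), bFourier f S ^ 2 = 1 := by
    have h2 := Finset.sum_erase_add Finset.univ (fun S : Finset (Fin n) => bFourier f S ^ 2)
      (Finset.mem_univ ∅)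
    simp only [hemp, hPar] at h2
    linarith [h2]
  have hIval : I = ∑ S ∈ Finset.univ.erase (∅ : Finset (Fin n)),
      (S.card : ℝ) * bFourier f S ^ 2 := by
    have := Finset.sum_erase_add Finset.univ
      (fun S : Finset (Fin n) => (S.card : ℝ) * bFourier f S ^ 2) (Finset.mem_univ ∅)
    rw [hI, totInfl, ← this]
    simp
  have hcard1 : ∀ S ∈ Finset.univ.erase (∅ : Finset (Fin n)), (1:ℝ) ≤ S.card := by
    intro S hS
    have : S ≠ ∅ := Finset.ne_of_mem_erase hS
    have : 0 < S.card := Finset.card_pos.2 (Finset.nonempty_iff_ne_empty.2 this)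
    exact_mod_cast this
  have hI1 : 1 ≤ I := by
    rw [hIval, ← hsum_ne]
    apply Finset.sum_le_sum
    intro S hS
    have h1 := hcard1 S hS
    nlinarith [sq_nonneg (bFourier f S)]
  have hI0 : 0 < I := by linarith
  -- Markov: small sets carry at least half the weight
  set A : Finset (Finset (Fin n)) :=
    (Finset.univ.erase ∅).filter (fun S => (S.card : ℝ) ≤ 2 * I) with hA
  have hhalf : 1 / 2 ≤ ∑ S ∈ A, bFourier f S ^ 2 := by
    have hsplit := Finset.sum_filter_add_sum_filter_not (Finset.univ.erase (∅ : Finset (Fin n)))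
      (fun S => (S.card : ℝ) ≤ 2 * I) (fun S => bFourier f S ^ 2)
    have htail : ∑ S ∈ (Finset.univ.erase (∅ : Finset (Fin n))).filter
        (fun S => ¬ (S.card : ℝ) ≤ 2 * I), bFourier f S ^ 2 ≤ 1 / 2 := by
      have h2I : ∀ S ∈ (Finset.univ.erase (∅ : Finset (Fin n))).filter
          (fun S => ¬ (S.card : ℝ) ≤ 2 * I), bFourier f S ^ 2
            ≤ (S.card : ℝ) * bFourier f S ^ 2 / (2 * I) := by
        intro S hS
        have hc : ¬ (S.card : ℝ) ≤ 2 * I := (Finset.mem_filter.1 hS).2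
        push_neg at hc
        rw [le_div_iff₀ (by positivity)]
        nlinarith [sq_nonneg (bFourier f S)]
      calc ∑ S ∈ (Finset.univ.erase (∅ : Finset (Fin n))).filter
            (fun S => ¬ (S.card : ℝ) ≤ 2 * I), bFourier f S ^ 2
          ≤ ∑ S ∈ (Finset.univ.erase (∅ : Finset (Fin n))).filter
            (fun S => ¬ (S.card : ℝ) ≤ 2 * I), (S.card : ℝ) * bFourier f S ^ 2 / (2 * I) :=
            Finset.sum_le_sum h2I
        _ = (∑ S ∈ (Finset.univ.erase (∅ : Finset (Fin n))).filter
            (fun S => ¬ (S.card : ℝ) ≤ 2 * I), (S.card : ℝ) * bFourier f S ^ 2) / (2 * I) := by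
            rw [Finset.sum_div]
        _ ≤ I / (2 * I) := by
            have hsub : ∑ S ∈ (Finset.univ.erase (∅ : Finset (Fin n))).filter
                (fun S => ¬ (S.card : ℝ) ≤ 2 * I), (S.card : ℝ) * bFourier f S ^ 2 ≤ I := by
              rw [hI, totInfl]
              apply Finset.sum_le_sum_of_subset_of_nonneg (Finset.subset_univ _)
              intro S _ _
              positivity
            exact div_le_div_of_nonneg_right hsub (by positivity : (0:ℝ) < 2 * I).le
        _ = 1 / 2 := by field_simp
    rw [hA]
    linarith [hsplit, htail, hsum_ne]
  -- lower bound for K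
  set K : ℝ := ∑ S : Finset (Fin n), (S.card : ℝ) * ((3:ℝ)⁻¹ ^ S.card * bFourier f S ^ 2)
    with hK
  have hKlow : Real.exp (-(2 * Real.log 3) * I) * (1 / 2) ≤ K := by
    have hterm : ∀ S ∈ A, Real.exp (-(2 * Real.log 3) * I) * bFourier f S ^ 2
        ≤ (S.card : ℝ) * ((3:ℝ)⁻¹ ^ S.card * bFourier f S ^ 2) := by
      intro S hS
      have hSmem := Finset.mem_filter.1 hS
      have hc1 : (1:ℝ) ≤ S.card := hcard1 S hSmem.1
      have hc2 : (S.card : ℝ) ≤ 2 * I := hSmem.2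
      have hexp : Real.exp (-(2 * Real.log 3) * I) ≤ (3:ℝ)⁻¹ ^ S.card := by
        rw [inv3_pow_exp]
        apply Real.exp_le_exp.2
        have hl3 : 0 ≤ Real.log 3 := Real.log_nonneg (by norm_num)
        nlinarith
      calc Real.exp (-(2 * Real.log 3) * I) * bFourier f S ^ 2
          ≤ (3:ℝ)⁻¹ ^ S.card * bFourier f S ^ 2 :=
            mul_le_mul_of_nonneg_right hexp (sq_nonneg _)
        _ ≤ (S.card : ℝ) * ((3:ℝ)⁻¹ ^ S.card * bFourier f S ^ 2) :=
            le_mul_of_one_le_left (by positivity) hc1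
    calc Real.exp (-(2 * Real.log 3) * I) * (1 / 2)
        ≤ Real.exp (-(2 * Real.log 3) * I) * ∑ S ∈ A, bFourier f S ^ 2 :=
          mul_le_mul_of_nonneg_left hhalf (Real.exp_nonneg _)
      _ = ∑ S ∈ A, Real.exp (-(2 * Real.log 3) * I) * bFourier f S ^ 2 := Finset.mul_sum _ _ _
      _ ≤ ∑ S ∈ A, (S.card : ℝ) * ((3:ℝ)⁻¹ ^ S.card * bFourier f S ^ 2) :=
          Finset.sum_le_sum hterm
      _ ≤ K := by
          rw [hK]
          apply Finset.sum_le_sum_of_subset_of_nonneg (Finset.subset_univ _)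
          intro S _ _
          positivity
  -- upper bound for K
  have hKup : K ≤ Real.sqrt m * I := by
    have hswap := sum_sum_mem (fun S : Finset (Fin n) => (3:ℝ)⁻¹ ^ S.card * bFourier f S ^ 2)
    have hswap2 := sum_sum_mem (fun S : Finset (Fin n) => bFourier f S ^ 2)
    have hQk : ∀ j : Fin n, ∑ S ∈ univ.filter (fun S : Finset (Fin n) => j ∈ S),
        (3:ℝ)⁻¹ ^ S.card * bFourier f S ^ 2 ≤ inflS f j * Real.sqrt m := by
      intro j
      calc ∑ S ∈ univ.filter (fun S : Finset (Fin n) => j ∈ S),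
          (3:ℝ)⁻¹ ^ S.card * bFourier f S ^ 2
          ≤ inflS f j * Real.sqrt (inflS f j) := Q_le_infl_pow f hf j
        _ ≤ inflS f j * Real.sqrt m := by
            apply mul_le_mul_of_nonneg_left (Real.sqrt_le_sqrt (hk j (Finset.mem_univ j)))
              (inflS_nonneg f j)
    calc K = ∑ j : Fin n, ∑ S ∈ univ.filter (fun S : Finset (Fin n) => j ∈ S),
        (3:ℝ)⁻¹ ^ S.card * bFourier f S ^ 2 := by rw [hswap, hK]
      _ ≤ ∑ j : Fin n, inflS f j * Real.sqrt m := Finset.sum_le_sum fun j _ => hQk j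
      _ = Real.sqrt m * ∑ j : Fin n, inflS f j := by rw [← Finset.sum_mul]; ring
      _ = Real.sqrt m * I := by
          rw [hI, totInfl, ← hswap2]
          congr 1
  -- numeric conclusion
  have hlog3 : Real.log 3 ≤ 2 := by
    have := Real.log_le_sub_one_of_pos (by norm_num : (0:ℝ) < 3)
    linarith
  have hsqrtm : Real.exp (-(2 * Real.log 3) * I) / (2 * I) ≤ Real.sqrt m := by
    rw [div_le_iff₀ (by positivity)]
    nlinarith [hKlow, hKup, Real.sqrt_nonneg m]
  have hmge : (Real.exp (-(2 * Real.log 3) * I) / (2 * I)) ^ 2 ≤ m := by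
    have h2 := mul_le_mul hsqrtm hsqrtm (by positivity) (Real.sqrt_nonneg m)
    rw [Real.mul_self_sqrt hm0] at h2
    calc (Real.exp (-(2 * Real.log 3) * I) / (2 * I)) ^ 2
        = (Real.exp (-(2 * Real.log 3) * I) / (2 * I))
          * (Real.exp (-(2 * Real.log 3) * I) / (2 * I)) := sq _
      _ ≤ m := h2
  refine le_trans ?_ hmge
  -- exp(-13 I) ≤ (exp(-2 log3 I)/(2I))^2
  rw [div_pow, le_div_iff₀ (by positivity)]
  have hexp2 : Real.exp (-(2 * Real.log 3) * I) ^ 2 = Real.exp (-(4 * Real.log 3) * I) := by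
    rw [sq, ← Real.exp_add]
    congr 1
    ring
  rw [hexp2]
  have h5 : 4 * I ^ 2 ≤ Real.exp (5 * I) := by
    have h2 := Real.add_one_le_exp (2 * I)
    have h4 : (2 * I + 1) ^ 2 ≤ Real.exp (2 * I) ^ 2 := by
      apply pow_le_pow_left₀ (by linarith) h2
    rw [sq (Real.exp (2 * I)), ← Real.exp_add] at h4
    have h45 : Real.exp (2 * I + 2 * I) ≤ Real.exp (5 * I) := by
      apply Real.exp_le_exp.2; linarith
    nlinarith
  have hstep : Real.exp (-(13:ℝ) * I) * (2 * I) ^ 2 ≤ Real.exp (-8 * I) := by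
    have e1 : Real.exp (-(13:ℝ) * I) * Real.exp (5 * I) = Real.exp (-8 * I) := by
      rw [← Real.exp_add]; congr 1; ring
    calc Real.exp (-(13:ℝ) * I) * (2 * I) ^ 2
        = Real.exp (-(13:ℝ) * I) * (4 * I ^ 2) := by ring
      _ ≤ Real.exp (-(13:ℝ) * I) * Real.exp (5 * I) :=
          mul_le_mul_of_nonneg_left h5 (Real.exp_nonneg _)
      _ = Real.exp (-8 * I) := e1
  have hfin : Real.exp (-(8:ℝ) * I) ≤ Real.exp (-(4 * Real.log 3) * I) := by
    apply Real.exp_le_exp.2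
    nlinarith
  calc Real.exp (-13 * I) * (2 * I) ^ 2 ≤ Real.exp (-8 * I) := hstep
    _ ≤ Real.exp (-(4 * Real.log 3) * I) := hfin

end Final


theorem kkl_edge_isoperimetric :
    ∃ c : ℝ, 0 < c ∧ ∀ (n : ℕ) (f : (Fin n → Bool) → ℝ), IsBooleanFn f →
      bExpect f = 0 →
      ∃ k : Fin n, Real.exp (-c * totInfl f) ≤ inflS f k := by
  exact ⟨13, by norm_num, kkl_main⟩
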